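/- Let R be a discrete valuation ring. Then the field of fractions Q(R) of R is not a pseudo-absorbing primary multiplication R-module. -/

import Mathlib

/-- A proper ideal `I` is 2-absorbing primary if `a*b*c ∈ I` implies
`a*b ∈ I` or `a*c ∈ √I` or `b*c ∈ √I`. -/
def IsTwoAbsPrimary {R : Type*} [CommRing R] (I : Ideal R) : Prop :=
  I ≠ ⊤ ∧ ∀ a b c : R, a * b * c ∈ I → a * b ∈ I ∨ a * c ∈ I.radical ∨ b * c ∈ I.radical

/-- A proper submodule `N` of `M` is pseudo-absorbing primary if `(N :_R M)`
is a 2-absorbing primary ideal of `R`. -/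
def IsPseudoAbsPrimary {R M : Type*} [CommRing R] [AddCommGroup M] [Module R M]
    (N : Submodule R M) : Prop :=
  N ≠ ⊤ ∧ IsTwoAbsPrimary (N.colon ⊤)

/-- `M` is a pseudo-absorbing primary multiplication module if every
pseudo-absorbing primary submodule `N` satisfies `N = I • M` for some ideal `I`. -/
def IsPAPMultiplication (R M : Type*) [CommRing R] [AddCommGroup M] [Module R M] : Prop :=
  ∀ N : Submodule R M, IsPseudoAbsPrimary N → ∃ I : Ideal R, N = I • (⊤ : Submodule R M)

/-- For a DVR R, the field of fractions Q(R) is not a pseudo-absorbing primary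
multiplication R-module. -/
theorem stmt_7 {R : Type*} [CommRing R] [IsDomain R] [IsDiscreteValuationRing R] :
    ¬ IsPAPMultiplication R (FractionRing R) := by
  intro h
  set K := FractionRing R
  set f := algebraMap R K with hf
  set N : Submodule R K := Submodule.span R {1} with hN
  obtain ⟨π, hπ⟩ := IsDiscreteValuationRing.exists_irreducible R
  have hπ0 : π ≠ 0 := hπ.ne_zero
  have hinj : Function.Injective f := IsFractionRing.injective R K
  have hfπ0 : f π ≠ 0 := by
    simpa using hinj.ne_iff.mpr hπ0
  have hmem : ∀ q : K, q ∈ N ↔ ∃ r : R, f r = q := by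
    intro q
    constructor
    · intro hq
      obtain ⟨r, hr⟩ := Submodule.mem_span_singleton.mp hq
      exact ⟨r, by simpa [Algebra.smul_def] using hr⟩
    · rintro ⟨r, rfl⟩
      exact Submodule.mem_span_singleton.mpr ⟨r, by simp [Algebra.smul_def, hf]⟩
  -- N is proper
  have hNtop : N ≠ ⊤ := by
    intro htop
    have : ((f π)⁻¹ : K) ∈ N := htop ▸ Submodule.mem_top
    obtain ⟨r, hr⟩ := (hmem _).mp this
    have h1 : f (r * π) = 1 := by
      rw [map_mul, hr, inv_mul_cancel₀ hfπ0]
    have hrπ : r * π = 1 := hinj (by simpa using h1)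
    exact hπ.not_isUnit (IsUnit.of_mul_eq_one (a := π) r (by rw [mul_comm]; exact hrπ))
  -- the colon ideal is ⊥
  have hcolon : N.colon ⊤ = ⊥ := by
    ext r
    simp only [Submodule.mem_colon, Ideal.mem_bot]
    constructor
    · intro hr
      by_contra hr0
      have hfr : f r ≠ 0 := by simpa using hinj.ne_iff.mpr hr0
      apply hNtop
      rw [eq_top_iff]
      intro q _
      have := hr (q / f r) (Submodule.mem_top (R := R))
      rw [Algebra.smul_def, ← hf, mul_div_cancel₀ q hfr] at this
      exact this
    · rintro rfl
      intro q _
      simpa using N.zero_mem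
  -- N is pseudo-absorbing primary
  have hpap : IsPseudoAbsPrimary N := by
    refine ⟨hNtop, ?_⟩
    rw [hcolon]
    constructor
    · exact bot_ne_top
    · intro a b c habc
      rw [Ideal.mem_bot] at habc
      rcases mul_eq_zero.mp habc with hab | hc
      · exact Or.inl (Ideal.mem_bot.mpr hab)
      · exact Or.inr (Or.inl (by rw [hc, mul_zero]; exact Ideal.zero_mem _))
  obtain ⟨I, hI⟩ := h N hpap
  rcases eq_or_ne I ⊥ with rfl | hI0
  · rw [Submodule.bot_smul] at hI
    have : (1 : K) ∈ N := (hmem 1).mpr ⟨1, map_one f⟩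
    rw [hI] at this
    simpa using this
  · obtain ⟨r, hrI, hr0⟩ := Submodule.exists_mem_ne_zero_of_ne_bot hI0
    have hfr : f r ≠ 0 := by simpa using hinj.ne_iff.mpr hr0
    have htop : I • (⊤ : Submodule R K) = ⊤ := by
      rw [eq_top_iff]
      intro q _
      have : r • (q / f r) ∈ I • (⊤ : Submodule R K) :=
        Submodule.smul_mem_smul hrI Submodule.mem_top
      convert this using 1
      rw [Algebra.smul_def, ← hf, mul_div_cancel₀ q hfr]
    rw [htop] at hI
    exact hNtop hI
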